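/- Let C be a shortest even hole of a graph G, let u and v be distinct vertices of C, let the uv-path P of G be a C-shallow worst C-shortcut, and let C1, C2 be the uv-paths of C with ‖C1‖ < ‖C2‖. Let x (respectively, y) be the neighbor of u (respectively, v) in C1, and let C3 be the xy-path of C1. Then every xy-path P_xy of G with ‖P_xy‖ = ‖C3‖ satisfies that G[P_xy ∪ C2] is a hole of G. -/

import Mathlib

open SimpleGraph

variable {V : Type*}

/-- The vertex set of a walk. -/
def suppSet {G : SimpleGraph V} {u v : V} (w : G.Walk u v) : Set V :=
  {x | x ∈ w.support}

/-- An induced cycle of `G`. -/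
def IsInducedCycle (G : SimpleGraph V) {r : V} (w : G.Walk r r) : Prop :=
  w.IsCycle ∧ ∀ a b : V, a ∈ w.support → b ∈ w.support → G.Adj a b → s(a, b) ∈ w.edges

/-- A hole of `G`: an induced cycle with at least 4 vertices. -/
def IsHole (G : SimpleGraph V) {r : V} (w : G.Walk r r) : Prop :=
  IsInducedCycle G w ∧ 4 ≤ w.length

/-- An even hole of `G`. -/
def IsEvenHole (G : SimpleGraph V) {r : V} (w : G.Walk r r) : Prop :=
  IsHole G w ∧ Even w.length

/-- A shortest even hole of `G`. -/
def IsShortestEvenHole (G : SimpleGraph V) {r : V} (w : G.Walk r r) : Prop :=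
  IsEvenHole G w ∧ ∀ (y : V) (w' : G.Walk y y), IsEvenHole G w' → w.length ≤ w'.length

/-- `P` is a path of `G` all of whose edges lie on the walk `c`
(used for "a `uv`-path of `C`"). -/
def IsPathOf (G : SimpleGraph V) {p q u v : V} (c : G.Walk p q) (P : G.Walk u v) : Prop :=
  P.IsPath ∧ ∀ e ∈ P.edges, e ∈ c.edges

/-- The distance `d_C(u,v)` between `u` and `v` within the cycle `c`. -/
noncomputable def cycleDist (G : SimpleGraph V) {r : V} (c : G.Walk r r) (u v : V) : ℕ :=
  sInf {n | ∃ P : G.Walk u v, IsPathOf G c P ∧ P.length = n}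

/-- The induced subgraph `G[S]` is a hole of `G`. -/
def IsHoleOn (G : SimpleGraph V) (S : Set V) : Prop :=
  ∃ (r : V) (w : G.Walk r r), IsHole G w ∧ suppSet w = S

/-- The induced subgraph `G[S]` is an even hole of `G`. -/
def IsEvenHoleOn (G : SimpleGraph V) (S : Set V) : Prop :=
  ∃ (r : V) (w : G.Walk r r), IsEvenHole G w ∧ suppSet w = S

/-- The induced subgraph `G[S]` is a shortest even hole of `G`. -/
def IsShortestEvenHoleOn (G : SimpleGraph V) (S : Set V) : Prop :=
  ∃ (r : V) (w : G.Walk r r), IsShortestEvenHole G w ∧ suppSet w = S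

/-- `P` is `C`-good: the union of `P` and one of the two `uv`-paths of `C`
is again a shortest even hole of `G`. -/
def CGood (G : SimpleGraph V) {r u v : V} (c : G.Walk r r) (P : G.Walk u v) : Prop :=
  ∃ Q : G.Walk u v, IsPathOf G c Q ∧ IsShortestEvenHoleOn G (suppSet P ∪ suppSet Q)

/-- The standing assumptions for `C`-shortcuts: `P` is a `uv`-path of `G` for distinct
nonadjacent vertices `u`, `v` of `C`. -/
def ShortcutSetup (G : SimpleGraph V) {r u v : V} (c : G.Walk r r) (P : G.Walk u v) : Prop :=
  P.IsPath ∧ u ≠ v ∧ ¬G.Adj u v ∧ u ∈ c.support ∧ v ∈ c.support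

/-- `P` is a `C`-shortcut: `2 ≤ ‖P‖ ≤ d_C(u,v)` and `‖P‖ < ‖C‖/4`. -/
def CShortcut (G : SimpleGraph V) {r u v : V} (c : G.Walk r r) (P : G.Walk u v) : Prop :=
  2 ≤ P.length ∧ P.length ≤ cycleDist G c u v ∧ 4 * P.length < c.length

/-- `C1` and `C2` are the two `uv`-paths of the cycle `c`. -/
def ArcPair (G : SimpleGraph V) {r u v : V} (c : G.Walk r r) (C1 C2 : G.Walk u v) : Prop :=
  IsPathOf G c C1 ∧ IsPathOf G c C2 ∧ C1.length + C2.length = c.length ∧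
    ∀ e ∈ c.edges, e ∈ C1.edges ∨ e ∈ C2.edges

/-- `P` is `C`-shallow: `‖P‖ ≥ d_C(u,v) − 1` and `G[P ∪ C2]` is a hole, where `C2` is the
longer of the two `uv`-paths of `C`. -/
def CShallow (G : SimpleGraph V) {r u v : V} (c : G.Walk r r) (P : G.Walk u v) : Prop :=
  cycleDist G c u v - 1 ≤ P.length ∧
    ∀ C1 C2 : G.Walk u v, ArcPair G c C1 C2 → C1.length ≤ C2.length →
      IsHoleOn G (suppSet P ∪ suppSet C2)

/-- `P` is a worst `C`-shortcut. -/
def WorstCShortcut (G : SimpleGraph V) {r u v : V} (c : G.Walk r r) (P : G.Walk u v) : Prop :=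
  ShortcutSetup G c P ∧ CShortcut G c P ∧ ¬CGood G c P ∧
    ∀ (u' v' : V) (P' : G.Walk u' v'),
      ShortcutSetup G c P' → CShortcut G c P' → ¬CGood G c P' →
        (P.length < P'.length ∨
          (P.length = P'.length ∧ cycleDist G c u' v' ≤ cycleDist G c u v))

/-- `C` is good in `G`: every `C`-shortcut is `C`-good. -/
def GoodHole (G : SimpleGraph V) {r : V} (c : G.Walk r r) : Prop :=
  ∀ (u v : V) (P : G.Walk u v), ShortcutSetup G c P → CShortcut G c P → CGood G c P

/-- `P` is a shortest `uv`-path of `G`. -/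
def IsShortestPath (G : SimpleGraph V) {u v : V} (P : G.Walk u v) : Prop :=
  P.IsPath ∧ ∀ Q : G.Walk u v, P.length ≤ Q.length

/-- The closed neighborhood `N_G[S]` of a vertex set `S`. -/
def closedNbhd (G : SimpleGraph V) (S : Set V) : Set V :=
  S ∪ {x | ∃ y ∈ S, G.Adj y x}

/-- The subgraph of `G` induced on `S` (kept on the same vertex type: edges of `G`
with both ends in `S`). -/
def restrictTo (G : SimpleGraph V) (S : Set V) : SimpleGraph V where
  Adj a b := G.Adj a b ∧ a ∈ S ∧ b ∈ S
  symm := ⟨fun a b h => ⟨h.1.symm, h.2.2, h.2.1⟩⟩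
  loopless := ⟨fun a h => G.loopless.irrefl a h.1⟩

/-- The vertex set of `H(u,v,x,y) = G[(V(G) \ N_G[V(P_uv ∪ P_xy) \ {u,v}]) ∪ {u,v}]`. -/
def Hverts (G : SimpleGraph V) {u v a b : V} (Puv : G.Walk u v) (Pxy : G.Walk a b) : Set V :=
  (Set.univ \ closedNbhd G ((suppSet Puv ∪ suppSet Pxy) \ {u, v})) ∪ {u, v}

/-- The graph `H(u,v,x,y)`. -/
def Hgraph (G : SimpleGraph V) {u v a b : V} (Puv : G.Walk u v) (Pxy : G.Walk a b) :
    SimpleGraph V :=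
  restrictTo G (Hverts G Puv Pxy)

/-- `G` is shallow. -/
def ShallowGraph (G : SimpleGraph V) : Prop :=
  ∃ (r : V) (c : G.Walk r r), IsShortestEvenHole G c ∧
    ∀ (u v : V) (P : G.Walk u v), WorstCShortcut G c P → CShallow G c P

/-- `G` is anti-shallow. -/
def AntiShallowGraph (G : SimpleGraph V) : Prop :=
  ∀ (r : V) (c : G.Walk r r), IsShortestEvenHole G c → ¬GoodHole G c →
    ∀ (u v : V) (P : G.Walk u v), WorstCShortcut G c P → ¬CShallow G c P

/-- The induced subgraph `G[S]` is a path with end-vertices `u` and `v`. -/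
def IsInducedPathOn (G : SimpleGraph V) (u v : V) (S : Set V) : Prop :=
  ∃ Q : G.Walk u v, Q.IsPath ∧ suppSet Q = S ∧
    ∀ a b : V, a ∈ S → b ∈ S → G.Adj a b → s(a, b) ∈ Q.edges


section Aux

variable {G : SimpleGraph V}

@[simp] lemma mem_suppSet {a b : V} {w : G.Walk a b} {z : V} :
    z ∈ suppSet w ↔ z ∈ w.support := Iff.rfl

lemma suppSet_finite {a b : V} (w : G.Walk a b) : (suppSet w).Finite := by
  classical
  have : suppSet w = ↑w.support.toFinset := by ext z; simp [suppSet]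
  rw [this]; exact (w.support.toFinset).finite_toSet

lemma ncard_suppSet_le {a b : V} (w : G.Walk a b) : (suppSet w).ncard ≤ w.length + 1 := by
  classical
  have h : suppSet w = ↑w.support.toFinset := by ext z; simp [suppSet]
  rw [h, Set.ncard_coe_finset]
  calc w.support.toFinset.card ≤ w.support.length := w.support.toFinset_card_le
    _ = w.length + 1 := w.length_support

lemma ncard_suppSet_path {a b : V} {w : G.Walk a b} (hw : w.IsPath) :
    (suppSet w).ncard = w.length + 1 := by
  classical
  have h : suppSet w = ↑w.support.toFinset := by ext z; simp [suppSet]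
  rw [h, Set.ncard_coe_finset, List.toFinset_card_of_nodup hw.support_nodup, w.length_support]

lemma eq_nil_of_length_zero {a : V} {w : G.Walk a a} (h : w.length = 0) : w = SimpleGraph.Walk.nil := by
  cases w with
  | nil => rfl
  | cons h' q => simp [SimpleGraph.Walk.length_cons] at h

lemma path_loop_nil {a : V} {p : G.Walk a a} (hp : p.IsPath) : p = SimpleGraph.Walk.nil := by
  cases p with
  | nil => rfl
  | cons h q =>
    exact absurd q.end_mem_support ((SimpleGraph.Walk.cons_isPath_iff h q).mp hp).2

lemma ncard_suppSet_cycle {a : V} {w : G.Walk a a} (hw : w.IsCycle) :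
    (suppSet w).ncard = w.length := by
  classical
  have hnd : w.support.tail.Nodup := ((SimpleGraph.Walk.isCycle_def w).mp hw).2.2
  have hmem : a ∈ w.support.tail := by
    cases w with
    | nil => exact absurd rfl ((SimpleGraph.Walk.isCycle_def _).mp hw).2.1
    | cons h q => simpa using q.end_mem_support
  have hset : suppSet w = {z | z ∈ w.support.tail} := by
    ext z
    simp only [mem_suppSet, Set.mem_setOf_eq]
    constructor
    · intro hz
      rw [w.support_eq_cons] at hz
      rcases List.mem_cons.mp hz with rfl | hz
      · exact hmem
      · exact hz
    · intro hz
      exact List.tail_subset _ hz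
  rw [hset]
  have : {z | z ∈ w.support.tail} = ↑w.support.tail.toFinset := by ext z; simp
  rw [this, Set.ncard_coe_finset, List.toFinset_card_of_nodup hnd, List.length_tail,
    w.length_support]
  omega

lemma exists_mem_edge_of_mem_support {a b z : V} {w : G.Walk a b} (hnil : ¬ w.Nil)
    (hz : z ∈ w.support) : ∃ e ∈ w.edges, z ∈ e := by
  induction w with
  | nil => exact absurd (by simp [SimpleGraph.Walk.nil_iff_length_eq]) hnil
  | @cons a' v' b' h q ih =>
    rw [SimpleGraph.Walk.support_cons, List.mem_cons] at hz
    rcases hz with rfl | hz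
    · exact ⟨s(z, v'), by simp [SimpleGraph.Walk.edges_cons], Sym2.mem_mk_left _ _⟩
    · by_cases hq : q.Nil
      · have : q.support = [v'] := SimpleGraph.Walk.nil_iff_support_eq.mp hq
        rw [this, List.mem_singleton] at hz
        subst hz
        exact ⟨s(a', z), by simp [SimpleGraph.Walk.edges_cons], Sym2.mem_mk_right _ _⟩
      · obtain ⟨e, he, hze⟩ := ih hq hz
        exact ⟨e, by simp [SimpleGraph.Walk.edges_cons, he], hze⟩

lemma mem_support_of_mem_edge {a b z : V} {w : G.Walk a b} {e : Sym2 V} (he : e ∈ w.edges)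
    (hz : z ∈ e) : z ∈ w.support := by
  induction e with
  | _ cc d =>
    rcases Sym2.mem_iff.mp hz with rfl | rfl
    · exact w.fst_mem_support_of_mem_edges he
    · exact w.snd_mem_support_of_mem_edges he

lemma eq_cons_of_edge_head {a b : V} {p : G.Walk a b} (hp : p.IsPath) {e : Sym2 V}
    (he : e ∈ p.edges) (ha : a ∈ e) :
    ∃ (x : V) (h : G.Adj a x) (q : G.Walk x b), p = SimpleGraph.Walk.cons h q ∧ e = s(a, x) := by
  cases p with
  | nil => simp at he
  | cons h q =>
    rw [SimpleGraph.Walk.edges_cons, List.mem_cons] at he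
    rcases he with he | he
    · exact ⟨_, h, q, rfl, he⟩
    · exact absurd (mem_support_of_mem_edge he ha) ((SimpleGraph.Walk.cons_isPath_iff h q).mp hp).2

lemma arcPair_symm {r a b : V} {c : G.Walk r r} {D1 D2 : G.Walk a b}
    (h : ArcPair G c D1 D2) : ArcPair G c D2 D1 :=
  ⟨h.2.1, h.1, by have := h.2.2.1; omega, fun e he => (h.2.2.2 e he).symm⟩

end Aux

section Aux2

variable {G : SimpleGraph V}

lemma suppSet_union_arcPair {r a b : V} {c : G.Walk r r} {D1 D2 : G.Walk a b}
    (hc : c.IsCycle) (h : ArcPair G c D1 D2) :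
    suppSet D1 ∪ suppSet D2 = suppSet c := by
  have h3 := hc.three_le_length
  have hcnil : ¬ c.Nil := by rw [SimpleGraph.Walk.nil_iff_length_eq]; omega
  have hlen := h.2.2.1
  have hnn : 1 ≤ D1.length ∨ 1 ≤ D2.length := by omega
  have main : ∀ (W : G.Walk a b), (∀ e ∈ W.edges, e ∈ c.edges) → 1 ≤ W.length →
      ∀ z ∈ W.support, z ∈ c.support := by
    intro W hWe hWl z hz
    have hWnil : ¬ W.Nil := by rw [SimpleGraph.Walk.nil_iff_length_eq]; omega
    obtain ⟨e, he, hze⟩ := exists_mem_edge_of_mem_support hWnil hz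
    exact mem_support_of_mem_edge (hWe e he) hze
  have hain : a ∈ c.support := by
    rcases hnn with h1 | h1
    · exact main D1 h.1.2 h1 a D1.start_mem_support
    · exact main D2 h.2.1.2 h1 a D2.start_mem_support
  ext z
  simp only [Set.mem_union, mem_suppSet]
  constructor
  · have hside : ∀ (W : G.Walk a b), (∀ e ∈ W.edges, e ∈ c.edges) → z ∈ W.support →
        z ∈ c.support := by
      intro W hWe hz
      rcases Nat.eq_zero_or_pos W.length with h0 | h0
      · have hs : W.support = [a] :=
          SimpleGraph.Walk.nil_iff_support_eq.mp (SimpleGraph.Walk.nil_iff_length_eq.mpr h0)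
        rw [hs, List.mem_singleton] at hz
        subst hz; exact hain
      · exact main W hWe h0 z hz
    rintro (hz | hz)
    · exact hside D1 h.1.2 hz
    · exact hside D2 h.2.1.2 hz
  · intro hz
    obtain ⟨e, he, hze⟩ := exists_mem_edge_of_mem_support hcnil hz
    rcases h.2.2.2 e he with h1 | h1
    · exact Or.inl (mem_support_of_mem_edge h1 hze)
    · exact Or.inr (mem_support_of_mem_edge h1 hze)

lemma suppSet_inter_arcPair {r a b : V} {c : G.Walk r r} {D1 D2 : G.Walk a b}
    (hc : c.IsCycle) (h : ArcPair G c D1 D2) (hab : a ≠ b) :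
    suppSet D1 ∩ suppSet D2 = {a, b} := by
  have hu := suppSet_union_arcPair hc h
  have hf1 := suppSet_finite D1
  have hf2 := suppSet_finite D2
  have h1 := ncard_suppSet_path h.1.1
  have h2 := ncard_suppSet_path h.2.1.1
  have hcyc := ncard_suppSet_cycle hc
  have hie := Set.ncard_union_add_ncard_inter (suppSet D1) (suppSet D2) hf1 hf2
  rw [hu, hcyc, h1, h2] at hie
  have hlen := h.2.2.1
  have hcard : (suppSet D1 ∩ suppSet D2).ncard = 2 := by omega
  have hsub : ({a, b} : Set V) ⊆ suppSet D1 ∩ suppSet D2 := by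
    intro z hz
    rcases hz with rfl | hz
    · exact ⟨D1.start_mem_support, D2.start_mem_support⟩
    · rw [Set.mem_singleton_iff] at hz
      subst hz
      exact ⟨D1.end_mem_support, D2.end_mem_support⟩
  have hcard2 : ({a, b} : Set V).ncard = 2 := Set.ncard_pair hab
  exact (Set.eq_of_subset_of_ncard_le hsub (by omega) (hf1.inter_of_left _)).symm

end Aux2

section Key

variable {G : SimpleGraph V}

lemma key_aux {r : V} {c : G.Walk r r} (hc : c.IsCycle) :
    ∀ (m : ℕ) {a b : V} (W D1 D2 : G.Walk a b), W.length ≤ m → a ≠ b → W.IsPath →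
      (∀ e ∈ W.edges, e ∈ c.edges) → ArcPair G c D1 D2 → W = D1 ∨ W = D2 := by
  intro m
  induction m with
  | zero =>
    intro a b W D1 D2 hm hab _ _ _
    exact absurd (SimpleGraph.Walk.eq_of_length_eq_zero (Nat.le_zero.mp hm)) hab
  | succ m ih =>
    intro a b W D1 D2 hm hab hW hWe hpair
    cases W with
    | nil => exact absurd rfl hab
    | @cons _ w1 _ hadj W' =>
      have main : ∀ (E1 E2 : G.Walk a b), ArcPair G c E1 E2 → s(a, w1) ∈ E1.edges →
          SimpleGraph.Walk.cons hadj W' = E1 := by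
        intro E1 E2 hp he
        obtain ⟨x1, h1, q1, hE1eq, hedge⟩ :=
          eq_cons_of_edge_head hp.1.1 he (Sym2.mem_mk_left a w1)
        have hx1 : w1 = x1 := Sym2.congr_right.mp hedge
        subst hx1
        have hW'path : W'.IsPath := hW.of_cons
        have hq1path : q1.IsPath := by
          have := hp.1.1
          rw [hE1eq] at this
          exact this.of_cons
        by_cases hw1b : w1 = b
        · subst hw1b
          rw [hE1eq, path_loop_nil hW'path, path_loop_nil hq1path]
        · have hanotW' : a ∉ W'.support := ((SimpleGraph.Walk.cons_isPath_iff _ _).mp hW).2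
          have hinter := suppSet_inter_arcPair hc hp hab
          have hw1E2 : w1 ∉ E2.support := by
            intro hmem
            have hw1E1 : w1 ∈ E1.support := by
              rw [hE1eq, SimpleGraph.Walk.support_cons]
              exact List.mem_cons_of_mem _ q1.start_mem_support
            have : w1 ∈ suppSet E1 ∩ suppSet E2 := ⟨hw1E1, hmem⟩
            rw [hinter] at this
            rcases this with rfl | hthis
            · exact hadj.ne rfl
            · rw [Set.mem_singleton_iff] at hthis
              exact hw1b hthis
          have hnewpair : ArcPair G c q1 (SimpleGraph.Walk.cons hadj.symm E2) := by
            refine ⟨⟨hq1path, ?_⟩, ⟨?_, ?_⟩, ?_, ?_⟩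
            · intro e he'
              apply hp.1.2
              rw [hE1eq, SimpleGraph.Walk.edges_cons]
              exact List.mem_cons_of_mem _ he'
            · rw [SimpleGraph.Walk.cons_isPath_iff]
              exact ⟨hp.2.1.1, hw1E2⟩
            · intro e he'
              rw [SimpleGraph.Walk.edges_cons, List.mem_cons] at he'
              rcases he' with rfl | he'
              · rw [Sym2.eq_swap]
                apply hp.1.2
                rw [hE1eq, SimpleGraph.Walk.edges_cons]
                exact List.mem_cons_self
              · exact hp.2.1.2 e he'
            · have hl := hp.2.2.1
              rw [hE1eq, SimpleGraph.Walk.length_cons] at hl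
              rw [SimpleGraph.Walk.length_cons]
              omega
            · intro e he'
              rcases hp.2.2.2 e he' with h2 | h2
              · rw [hE1eq, SimpleGraph.Walk.edges_cons, List.mem_cons] at h2
                rcases h2 with rfl | h2
                · right
                  rw [SimpleGraph.Walk.edges_cons, Sym2.eq_swap]
                  exact List.mem_cons_self
                · exact Or.inl h2
              · exact Or.inr (by
                  rw [SimpleGraph.Walk.edges_cons]
                  exact List.mem_cons_of_mem _ h2)
          have hWlen : W'.length ≤ m := by
            rw [SimpleGraph.Walk.length_cons] at hm; omega
          have hWed : ∀ e ∈ W'.edges, e ∈ c.edges := by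
            intro e he'
            apply hWe
            rw [SimpleGraph.Walk.edges_cons]
            exact List.mem_cons_of_mem _ he'
          rcases ih W' q1 (SimpleGraph.Walk.cons hadj.symm E2) hWlen hw1b hW'path hWed hnewpair
            with hrec | hrec
          · rw [hE1eq, hrec]
          · exfalso
            apply hanotW'
            rw [hrec, SimpleGraph.Walk.support_cons]
            exact List.mem_cons_of_mem _ E2.start_mem_support
      have hfe : s(a, w1) ∈ c.edges :=
        hWe _ (by rw [SimpleGraph.Walk.edges_cons]; exact List.mem_cons_self)
      rcases hpair.2.2.2 _ hfe with h1 | h1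
      · exact Or.inl (main D1 D2 hpair h1)
      · exact Or.inr (main D2 D1 (arcPair_symm hpair) h1)

end Key

open SimpleGraph Walk in
theorem stmt5 (G : SimpleGraph V) {r u v : V} (c : G.Walk r r)
    (hC : IsShortestEvenHole G c) (P : G.Walk u v)
    (hworst : WorstCShortcut G c P) (hshallow : CShallow G c P)
    (C1 C2 : G.Walk u v) (harc : ArcPair G c C1 C2) (hlt : C1.length < C2.length)
    (x y : V) (hx : s(u, x) ∈ C1.edges) (hy : s(v, y) ∈ C1.edges)
    (C3 : G.Walk x y) (hC3 : IsPathOf G C1 C3) :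
    ∀ Pxy : G.Walk x y, Pxy.IsPath → Pxy.length = C3.length →
      IsHoleOn G (suppSet Pxy ∪ suppSet C2) := by
  intro Pxy hPxypath hPxylen
  obtain ⟨⟨⟨⟨hcyc, hind⟩, h4⟩, heven⟩, hmin⟩ := hC
  obtain ⟨⟨hPpath, huv, hnadj, huc, hvc⟩, ⟨hp2, hpd, hp4⟩, hPbad, hworstmin⟩ := hworst
  have hC1path : C1.IsPath := harc.1.1
  have hC1edges := harc.1.2
  have hC2path : C2.IsPath := harc.2.1.1
  have hC2edges := harc.2.1.2
  have hsum := harc.2.2.1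
  -- first decomposition of C1 at u
  obtain ⟨x0, hux0, Crest0, hC1eq0, hedge0⟩ :=
    eq_cons_of_edge_head hC1path hx (Sym2.mem_mk_left u x)
  obtain rfl : x = x0 := Sym2.congr_right.mp hedge0
  have hux : G.Adj u x := hux0
  have hCrestpath : Crest0.IsPath := by
    have h' := hC1path; rw [hC1eq0] at h'; exact h'.of_cons
  have hCrestlen : Crest0.length + 1 = C1.length := by
    rw [hC1eq0, Walk.length_cons]
  have hc1ge2 : 2 ≤ C1.length := by
    have h0 : C1.length ≠ 0 := fun h => huv (Walk.eq_of_length_eq_zero h)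
    have h1 : C1.length ≠ 1 := by
      intro h
      have hl0 : Crest0.length = 0 := by omega
      have hxv : x = v := Walk.eq_of_length_eq_zero hl0
      exact hnadj (by rw [hxv] at hux; exact hux)
    omega
  -- s(v,y) is an edge of Crest0
  have hsvy : s(v, y) ∈ Crest0.edges := by
    have h' := hy
    rw [hC1eq0, Walk.edges_cons, List.mem_cons] at h'
    rcases h' with h' | h'
    · exfalso
      rw [Sym2.eq_iff] at h'
      rcases h' with ⟨rfl, rfl⟩ | ⟨hvx, hyu⟩
      · exact huv rfl
      · exact hnadj (by rw [hvx]; exact hux)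
    · exact h'
  have hCrestrevpath : Crest0.reverse.IsPath := hCrestpath.reverse
  obtain ⟨y0, hvy, Rr, hRev, hedge1⟩ :=
    eq_cons_of_edge_head hCrestrevpath
      (by rw [Walk.edges_reverse, List.mem_reverse]; exact hsvy) (Sym2.mem_mk_left v y)
  obtain rfl : y = y0 := Sym2.congr_right.mp hedge1
  set C3' : G.Walk x y := Rr.reverse with hC3'def
  have hCrest : Crest0 = C3'.append (Walk.cons hvy.symm Walk.nil) := by
    conv_lhs => rw [← Walk.reverse_reverse Crest0, hRev]
    rw [Walk.reverse_cons]
  have hRrpath : Rr.IsPath := by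
    have h' := hCrestrevpath; rw [hRev] at h'; exact h'.of_cons
  have hC3'path : C3'.IsPath := hRrpath.reverse
  have hc1q : C3'.length + 2 = C1.length := by
    have h1 : Crest0.length = Rr.length + 1 := by
      rw [← Walk.length_reverse Crest0, hRev, Walk.length_cons]
    have h2 : C3'.length = Rr.length := Walk.length_reverse Rr
    omega
  have hC1supp : C1.support = u :: (C3'.support ++ [v]) := by
    rw [hC1eq0, Walk.support_cons, hCrest, Walk.support_append]
    simp
  have hC1edgeseq : C1.edges = s(u, x) :: (C3'.edges ++ [s(y, v)]) := by
    rw [hC1eq0, Walk.edges_cons, hCrest, Walk.edges_append]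
    simp
  have hxC1 : x ∈ C1.support := by
    rw [hC1supp]
    exact List.mem_cons_of_mem _ (List.mem_append_left _ C3'.start_mem_support)
  have hyC1 : y ∈ C1.support := by
    rw [hC1supp]
    exact List.mem_cons_of_mem _ (List.mem_append_left _ C3'.end_mem_support)
  have hinterUV := suppSet_inter_arcPair hcyc harc huv
  have hunionUV := suppSet_union_arcPair hcyc harc
  have hxu : x ≠ u := hux.ne'
  have hxv : x ≠ v := fun h => hnadj (by rw [← h]; exact hux)
  have hyv : y ≠ v := hvy.ne'
  have hyu : y ≠ u := fun h => hnadj (by have := hvy; rw [h] at this; exact this.symm)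
  have hxnC2 : x ∉ C2.support := by
    intro hmem
    have hxi : x ∈ suppSet C1 ∩ suppSet C2 := ⟨hxC1, hmem⟩
    rw [hinterUV] at hxi
    rcases hxi with h' | h'
    · exact hxu h'
    · exact hxv h'
  have hynC2 : y ∉ C2.support := by
    intro hmem
    have hyi : y ∈ suppSet C1 ∩ suppSet C2 := ⟨hyC1, hmem⟩
    rw [hinterUV] at hyi
    rcases hyi with h' | h'
    · exact hyu h'
    · exact hyv h'
  have hxc : x ∈ c.support := by
    have h' : x ∈ suppSet C1 ∪ suppSet C2 := Or.inl hxC1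
    rw [hunionUV] at h'; exact h'
  have hyc : y ∈ c.support := by
    have h' : y ∈ suppSet C1 ∪ suppSet C2 := Or.inl hyC1
    rw [hunionUV] at h'; exact h'
  have hu2 : u ∈ C2.support := C2.start_mem_support
  have hv2 : v ∈ C2.support := C2.end_mem_support
  rcases Nat.eq_zero_or_pos C3'.length with hq0 | hq1pos
  · -- C1 has length 2 : x = y and Pxy is trivial
    obtain rfl : x = y := Walk.eq_of_length_eq_zero hq0
    have hC3'nil : C3' = Walk.nil := path_loop_nil hC3'path
    have hPxynil : Pxy = Walk.nil := path_loop_nil hPxypath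
    have heq : suppSet Pxy ∪ suppSet C2 = suppSet c := by
      rw [← hunionUV]
      apply Set.Subset.antisymm
      · rintro z (hz | hz)
        · have hz' : z ∈ Pxy.support := hz
          rw [hPxynil] at hz'
          simp only [Walk.support_nil, List.mem_singleton] at hz'
          subst hz'
          exact Or.inl hxC1
        · exact Or.inr hz
      · rintro z (hz | hz)
        · have hz' : z ∈ C1.support := hz
          rw [hC1supp, hC3'nil] at hz'
          simp only [Walk.support_nil, List.mem_cons, List.mem_append, List.mem_singleton,
            List.not_mem_nil, or_false] at hz'
          rcases hz' with rfl | rfl | rfl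
          · exact Or.inr hu2
          · exact Or.inl (Walk.start_mem_support Pxy)
          · exact Or.inr hv2
        · exact Or.inr hz
    exact ⟨r, c, ⟨⟨hcyc, hind⟩, h4⟩, heq.symm⟩
  · -- C3' is nontrivial; in particular x ≠ y
    have hxyne : x ≠ y := by
      intro h
      subst h
      have := path_loop_nil hC3'path
      rw [this] at hq1pos
      simp at hq1pos
    -- the long x-y arc of c
    set D2x : G.Walk x y := Walk.cons hux.symm (C2.append (Walk.cons hvy Walk.nil)) with hD2def
    have hD2supp : D2x.support = x :: (C2.support ++ [y]) := by
      rw [hD2def, Walk.support_cons, Walk.support_append]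
      simp
    have hD2edges : D2x.edges = s(x, u) :: (C2.edges ++ [s(v, y)]) := by
      rw [hD2def, Walk.edges_cons, Walk.edges_append]
      simp
    have hD2len : D2x.length = C2.length + 2 := by
      rw [hD2def, Walk.length_cons, Walk.length_append, Walk.length_cons]
      simp
    have hD2path : D2x.IsPath := by
      rw [Walk.isPath_def, hD2supp]
      simp only [List.nodup_cons, List.mem_append, List.mem_singleton]
      refine ⟨?_, ?_⟩
      · rintro (h' | h')
        · exact hxnC2 h'
        · exact hxyne h'
      · rw [List.nodup_append]
        exact ⟨hC2path.support_nodup, List.nodup_singleton _,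
          by intro a ha b hb; rw [List.mem_singleton] at hb; subst hb; exact fun h => hynC2 (h ▸ ha)⟩
    have hpairxy : ArcPair G c C3' D2x := by
      refine ⟨⟨hC3'path, ?_⟩, ⟨hD2path, ?_⟩, ?_, ?_⟩
      · intro e he
        exact hC1edges _ (by
          rw [hC1edgeseq]
          exact List.mem_cons_of_mem _ (List.mem_append_left _ he))
      · intro e he
        rw [hD2edges, List.mem_cons] at he
        rcases he with rfl | he
        · exact hC1edges _ (by rw [hC1edgeseq]; exact List.mem_cons.mpr (Or.inl Sym2.eq_swap))
        · rcases List.mem_append.mp he with he | he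
          · exact hC2edges _ he
          · rw [List.mem_singleton] at he
            subst he
            exact hC1edges _ (by
              rw [hC1edgeseq]
              exact List.mem_cons_of_mem _
                (List.mem_append_right _ (List.mem_singleton.mpr Sym2.eq_swap)))
      · rw [hD2len]; omega
      · intro e he
        rcases harc.2.2.2 e he with h' | h'
        · rw [hC1edgeseq, List.mem_cons] at h'
          rcases h' with rfl | h'
          · right
            rw [hD2edges]
            exact List.mem_cons.mpr (Or.inl Sym2.eq_swap)
          · rcases List.mem_append.mp h' with h' | h'
            · exact Or.inl h'
            · rw [List.mem_singleton] at h'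
              subst h'
              right
              rw [hD2edges]
              exact List.mem_cons_of_mem _
                (List.mem_append_right _ (List.mem_singleton.mpr Sym2.eq_swap))
        · right
          rw [hD2edges]
          exact List.mem_cons_of_mem _ (List.mem_append_left _ h')
    -- C3 is the short x-y arc
    have hC3C3' : C3 = C3' := by
      rcases key_aux hcyc C3.length C3 C3' D2x le_rfl hxyne hC3.1
          (fun e he => hC1edges _ (hC3.2 e he)) hpairxy with h' | h'
      · exact h'
      · exfalso
        have hnd3 : C3.edges.Nodup := Walk.edges_nodup_of_support_nodup hC3.1.support_nodup
        have hndC1 : C1.edges.Nodup := Walk.edges_nodup_of_support_nodup hC1path.support_nodup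
        have hlen3 : C3.length ≤ C1.length := by
          classical
          have hcard : C3.edges.toFinset.card ≤ C1.edges.toFinset.card := by
            apply Finset.card_le_card
            intro e he
            rw [List.mem_toFinset] at *
            exact hC3.2 e he
          rwa [List.toFinset_card_of_nodup hnd3, List.toFinset_card_of_nodup hndC1,
            Walk.length_edges, Walk.length_edges] at hcard
        rw [h', hD2len] at hlen3
        omega
    have hq : Pxy.length = C3'.length := by rw [hPxylen, hC3C3']
    rcases Nat.lt_or_ge C3'.length 2 with hsmall | hq2'
    · -- C3'.length = 1 : C1 has length 3
      have hq1 : C3'.length = 1 := by omega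
      -- supports of C3' and Pxy are {x, y}
      have hsuppC3' : ∀ z, z ∈ C3'.support ↔ (z = x ∨ z = y) := by
        intro z
        constructor
        · intro hz
          classical
          have hcard : (suppSet C3').ncard = 2 := by
            rw [ncard_suppSet_path hC3'path, hq1]
          have hsub : ({x, y} : Set V) ⊆ suppSet C3' := by
            rintro w (rfl | hw)
            · exact C3'.start_mem_support
            · rw [Set.mem_singleton_iff] at hw
              subst hw
              exact C3'.end_mem_support
          have hcard2 : ({x, y} : Set V).ncard = 2 := Set.ncard_pair hxyne
          have := Set.eq_of_subset_of_ncard_le hsub (by omega) (suppSet_finite C3')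
          have hz' : z ∈ suppSet C3' := hz
          rw [← this] at hz'
          rcases hz' with rfl | hz'
          · exact Or.inl rfl
          · exact Or.inr hz'
        · rintro (rfl | rfl)
          · exact C3'.start_mem_support
          · exact C3'.end_mem_support
      have hsuppPxy : ∀ z, z ∈ Pxy.support ↔ (z = x ∨ z = y) := by
        intro z
        constructor
        · intro hz
          classical
          have hcard : (suppSet Pxy).ncard = 2 := by
            rw [ncard_suppSet_path hPxypath, hq, hq1]
          have hsub : ({x, y} : Set V) ⊆ suppSet Pxy := by
            rintro w (rfl | hw)
            · exact Pxy.start_mem_support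
            · rw [Set.mem_singleton_iff] at hw
              subst hw
              exact Pxy.end_mem_support
          have hcard2 : ({x, y} : Set V).ncard = 2 := Set.ncard_pair hxyne
          have := Set.eq_of_subset_of_ncard_le hsub (by omega) (suppSet_finite Pxy)
          have hz' : z ∈ suppSet Pxy := hz
          rw [← this] at hz'
          rcases hz' with rfl | hz'
          · exact Or.inl rfl
          · exact Or.inr hz'
        · rintro (rfl | rfl)
          · exact Pxy.start_mem_support
          · exact Pxy.end_mem_support
      have heq : suppSet Pxy ∪ suppSet C2 = suppSet c := by
        rw [← hunionUV]
        apply Set.Subset.antisymm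
        · rintro z (hz | hz)
          · rcases (hsuppPxy z).mp hz with rfl | rfl
            · exact Or.inl hxC1
            · exact Or.inl hyC1
          · exact Or.inr hz
        · rintro z (hz | hz)
          · have hz' : z ∈ C1.support := hz
            rw [hC1supp] at hz'
            simp only [List.mem_cons, List.mem_append, List.mem_singleton,
              List.not_mem_nil, or_false] at hz'
            rcases hz' with rfl | hz' | rfl
            · exact Or.inr hu2
            · exact Or.inl ((hsuppPxy z).mpr ((hsuppC3' z).mp hz'))
            · exact Or.inr hv2
          · exact Or.inr hz
      exact ⟨r, c, ⟨⟨hcyc, hind⟩, h4⟩, heq.symm⟩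
    · -- main case : C3'.length ≥ 2
      have hnadjxy : ¬ G.Adj x y := by
        intro hadjxy
        have hedge := hind x y hxc hyc hadjxy
        rcases harc.2.2.2 _ hedge with h' | h'
        · rw [hC1edgeseq, List.mem_cons] at h'
          rcases h' with h' | h'
          · rw [Sym2.eq_iff] at h'
            rcases h' with ⟨rfl, rfl⟩ | ⟨h1, h2⟩
            · exact hxu rfl
            · exact hyu h2
          · rcases List.mem_append.mp h' with h' | h'
            · obtain ⟨x2, h2, q2, hC3'eq, hedge2⟩ :=
                eq_cons_of_edge_head hC3'path h' (Sym2.mem_mk_left x y)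
              obtain rfl : y = x2 := Sym2.congr_right.mp hedge2
              have hq2path : q2.IsPath := by
                have h'' := hC3'path; rw [hC3'eq] at h''; exact h''.of_cons
              have : q2 = Walk.nil := path_loop_nil hq2path
              rw [hC3'eq, this] at hq2'
              simp at hq2'
            · rw [List.mem_singleton, Sym2.eq_iff] at h'
              rcases h' with ⟨rfl, rfl⟩ | ⟨h1, h2⟩
              · exact hxyne rfl
              · exact hxv h1
        · exact hxnC2 (C2.fst_mem_support_of_mem_edges h')
      have hduv : cycleDist G c u v = C1.length := by
        unfold cycleDist
        have hmemuv : C1.length ∈ {n | ∃ R : G.Walk u v, IsPathOf G c R ∧ R.length = n} :=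
          ⟨C1, harc.1, rfl⟩
        apply le_antisymm
        · exact Nat.sInf_le hmemuv
        · apply le_csInf ⟨C1.length, hmemuv⟩
          rintro n ⟨R, hR, rfl⟩
          rcases key_aux hcyc R.length R C1 C2 le_rfl huv hR.1 hR.2 harc with h' | h'
          · rw [h']
          · rw [h']; omega
      have hdxy : C3'.length ≤ cycleDist G c x y := by
        unfold cycleDist
        have hmemxy : C3'.length ∈ {n | ∃ R : G.Walk x y, IsPathOf G c R ∧ R.length = n} :=
          ⟨C3', hpairxy.1, rfl⟩
        apply le_csInf ⟨C3'.length, hmemxy⟩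
        rintro n ⟨R, hR, rfl⟩
        rcases key_aux hcyc R.length R C3' D2x le_rfl hxyne hR.1 hR.2 hpairxy with h' | h'
        · rw [h']
        · rw [h', hD2len]; omega
      have hpc1 : C1.length - 1 ≤ P.length := by
        rw [← hduv]; exact hshallow.1
      have hsetup : ShortcutSetup G c Pxy := ⟨hPxypath, hxyne, hnadjxy, hxc, hyc⟩
      have hshort : CShortcut G c Pxy := by
        refine ⟨?_, ?_, ?_⟩
        · rw [hq]; exact hq2'
        · rw [hq]; exact hdxy
        · rw [hq]; omega
      have hgood : CGood G c Pxy := by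
        by_contra hbad
        rcases hworstmin x y Pxy hsetup hshort hbad with h' | ⟨h', -⟩
        · rw [hq] at h'; omega
        · rw [hq] at h'; omega
      obtain ⟨A, hA, hSEH⟩ := hgood
      rcases key_aux hcyc A.length A C3' D2x le_rfl hxyne hA.1 hA.2 hpairxy with hAeq | hAeq
      · exfalso
        obtain ⟨r', w, hw, hsupp⟩ := hSEH
        have hwmin : c.length ≤ w.length := hmin r' w hw.1
        have hwcyc : w.IsCycle := hw.1.1.1.1
        have hwle := ncard_suppSet_cycle hwcyc
        rw [hsupp] at hwle
        have hle1 := ncard_suppSet_le Pxy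
        have hle2 := ncard_suppSet_le A
        have hun := Set.ncard_union_le (suppSet Pxy) (suppSet A)
        have hAlen : A.length = C3'.length := by rw [hAeq]
        have hchain : w.length ≤ (Pxy.length + 1) + (A.length + 1) := by
          rw [← hwle]
          exact le_trans hun (add_le_add hle1 hle2)
        omega
      · obtain ⟨r', w, hw, hsupp⟩ := hSEH
        refine ⟨r', w, hw.1.1, ?_⟩
        rw [hsupp, hAeq]
        ext z
        simp only [Set.mem_union, mem_suppSet, hD2supp, List.mem_cons, List.mem_append,
          List.mem_singleton, List.not_mem_nil, or_false]
        constructor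
        · rintro (hz | (rfl | (hz | rfl)))
          · exact Or.inl hz
          · exact Or.inl Pxy.start_mem_support
          · exact Or.inr hz
          · exact Or.inl Pxy.end_mem_support
        · rintro (hz | hz)
          · exact Or.inl hz
          · exact Or.inr (Or.inr (Or.inl hz))
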